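/- Let x, z ∈ 𝐇 be distinct, and let y ∈ ℝ³ satisfy y ∗ y = 1 or y ∗ y = −1, with y not a scalar multiple of x and not a scalar multiple of z. Suppose the angle at z is a right angle, i.e., t_z(y) ∗ t_z(x) = 0. Then the angle α at x satisfies cos α = −(x ∗ y)/‖x ⊗ y‖ · tanh(d(z,x)), where cos α = t_x(y) ∗ t_x(z) and d(z,x) = arccosh(−z ∗ x) is the hyperbolic distance from z to x. -/

import Mathlib

noncomputable section

/-- The Lorentzian inner product `u ∗ v = u₁v₁ + u₂v₂ − u₃v₃` on ℝ³. -/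
def lor (u v : Fin 3 → ℝ) : ℝ := u 0 * v 0 + u 1 * v 1 - u 2 * v 2

/-- The hyperboloid model of the hyperbolic plane. -/
def Hyp : Set (Fin 3 → ℝ) := {u | lor u u = -1 ∧ 0 < u 2}

/-- The Lorentzian cross product `u ⊗ v = J (u × v)`, `J = diag(1,1,−1)`. -/
def lcross (u v : Fin 3 → ℝ) : Fin 3 → ℝ :=
  ![u 1 * v 2 - u 2 * v 1, u 2 * v 0 - u 0 * v 2, -(u 0 * v 1 - u 1 * v 0)]

/-- Lorentzian magnitude `‖w‖ = √(w ∗ w)` (for `w` with `w ∗ w ≥ 0`). -/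
def lnorm (w : Fin 3 → ℝ) : ℝ := Real.sqrt (lor w w)

/-- The unit tangent vector at `p` toward `y`:
`t_p(y) = (y + (p ∗ y)p)/√(y ∗ y + (p ∗ y)²)`. -/
def tang (p y : Fin 3 → ℝ) : Fin 3 → ℝ :=
  (Real.sqrt (lor y y + lor p y ^ 2))⁻¹ • (y + lor p y • p)

/-- Inverse hyperbolic cosine. -/
def arcosh (x : ℝ) : ℝ := Real.log (x + Real.sqrt (x ^ 2 - 1))

/-- Hyperbolic distance between points of the hyperboloid: `d(p,q) = arccosh(−p ∗ q)`. -/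
def dHyp (p q : Fin 3 → ℝ) : ℝ := arcosh (-lor p q)

lemma lor_comm (u v : Fin 3 → ℝ) : lor u v = lor v u := by simp [lor]; ring

lemma lcross_sq (u v : Fin 3 → ℝ) :
    lor (lcross u v) (lcross u v) = lor u v ^ 2 - lor u u * lor v v := by
  simp [lor, lcross]; ring

lemma lor_expand (u v p q : Fin 3 → ℝ) (r s : ℝ) :
    lor (r • (u + lor p u • p)) (s • (v + lor q v • q))
      = r * s * (lor u v + lor q v * lor u q + lor p u * lor p v
          + lor p u * lor q v * lor p q) := by
  simp [lor, smul_eq_mul]; ring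

lemma tanh_arcosh (t : ℝ) (ht : 1 < t) :
    Real.tanh (arcosh t) = Real.sqrt (t ^ 2 - 1) / t := by
  have h1 : (0:ℝ) < t ^ 2 - 1 := by nlinarith
  have hs : Real.sqrt (t ^ 2 - 1) ^ 2 = t ^ 2 - 1 := Real.sq_sqrt h1.le
  have hspos : 0 < Real.sqrt (t ^ 2 - 1) := Real.sqrt_pos.mpr h1
  have hu : 0 < t + Real.sqrt (t ^ 2 - 1) := by linarith
  have hinv : (t + Real.sqrt (t ^ 2 - 1))⁻¹ = t - Real.sqrt (t ^ 2 - 1) := by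
    have hmul : (t + Real.sqrt (t ^ 2 - 1)) * (t - Real.sqrt (t ^ 2 - 1)) = 1 := by
      linear_combination -hs
    exact inv_eq_of_mul_eq_one_right hmul
  rw [Real.tanh_eq_sinh_div_cosh, arcosh, Real.sinh_log hu, Real.cosh_log hu, hinv,
    show (t + Real.sqrt (t ^ 2 - 1) - (t - Real.sqrt (t ^ 2 - 1))) / 2
      = Real.sqrt (t ^ 2 - 1) by ring,
    show (t + Real.sqrt (t ^ 2 - 1) + (t - Real.sqrt (t ^ 2 - 1))) / 2 = t by ring]

lemma lor_xz_lt (x z : Fin 3 → ℝ) (hx : x ∈ Hyp) (hz : z ∈ Hyp) (hxz : x ≠ z) :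
    lor x z < -1 := by
  obtain ⟨hx1, hx2⟩ := hx
  obtain ⟨hz1, hz2⟩ := hz
  simp only [lor] at hx1 hz1 ⊢
  have hne : ¬ (x 0 = z 0 ∧ x 1 = z 1) := by
    rintro ⟨h0, h1⟩
    apply hxz
    have hprod : (x 2 - z 2) * (x 2 + z 2) = 0 := by
      linear_combination hz1 - hx1 + (x 0 + z 0) * h0 + (x 1 + z 1) * h1
    have h2 : x 2 = z 2 := by
      rcases mul_eq_zero.mp hprod with h | h
      · linarith
      · linarith
    funext i; fin_cases i <;> assumption
  have hpos : 0 < (x 0 - z 0) ^ 2 + (x 1 - z 1) ^ 2 := by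
    rcases not_and_or.mp hne with h | h
    · nlinarith [sq_nonneg (x 1 - z 1), mul_self_pos.mpr (sub_ne_zero.mpr h)]
    · nlinarith [sq_nonneg (x 0 - z 0), mul_self_pos.mpr (sub_ne_zero.mpr h)]
  have hkey : (x 2 * z 2) ^ 2
      = (1 + x 0 * z 0 + x 1 * z 1) ^ 2 + ((x 0 - z 0) ^ 2 + (x 1 - z 1) ^ 2)
        + (x 0 * z 1 - x 1 * z 0) ^ 2 := by
    linear_combination (-(x 2 ^ 2)) * hz1 + (-(1 + z 0 ^ 2 + z 1 ^ 2)) * hx1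
  nlinarith [mul_pos hx2 hz2, sq_nonneg (x 0 * z 1 - x 1 * z 0), hkey, hpos]

lemma spacelike_pos (x y : Fin 3 → ℝ) (hx : x ∈ Hyp)
    (hyx : ¬ ∃ t : ℝ, y = t • x) : 0 < lor y y + lor x y ^ 2 := by
  obtain ⟨hx1, hx2⟩ := hx
  simp only [lor] at hx1 ⊢
  by_contra h
  push_neg at h
  have hkey : (x 2) ^ 2 * ((y 0 ^ 2 + y 1 ^ 2 - y 2 ^ 2)
        + (x 0 * y 0 + x 1 * y 1 - x 2 * y 2) ^ 2)
      = (y 0 + (x 0 * y 0 + x 1 * y 1 - x 2 * y 2) * x 0) ^ 2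
        + (y 1 + (x 0 * y 0 + x 1 * y 1 - x 2 * y 2) * x 1) ^ 2
        + (x 0 * y 1 - x 1 * y 0) ^ 2 := by
    linear_combination (-(y 0 ^ 2 + y 1 ^ 2
      + (x 0 * y 0 + x 1 * y 1 - x 2 * y 2) ^ 2)) * hx1
  have hx2sq : 0 < x 2 ^ 2 := by positivity
  have hle : (x 2) ^ 2 * ((y 0 ^ 2 + y 1 ^ 2 - y 2 ^ 2)
        + (x 0 * y 0 + x 1 * y 1 - x 2 * y 2) ^ 2) ≤ 0 := by
    nlinarith [mul_nonpos_of_nonneg_of_nonpos hx2sq.le h]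
  have h0 : y 0 + (x 0 * y 0 + x 1 * y 1 - x 2 * y 2) * x 0 = 0 := by
    have := sq_nonneg (y 0 + (x 0 * y 0 + x 1 * y 1 - x 2 * y 2) * x 0)
    have := sq_nonneg (y 1 + (x 0 * y 0 + x 1 * y 1 - x 2 * y 2) * x 1)
    have := sq_nonneg (x 0 * y 1 - x 1 * y 0)
    have hsq : (y 0 + (x 0 * y 0 + x 1 * y 1 - x 2 * y 2) * x 0) ^ 2 = 0 := by
      linarith
    exact pow_eq_zero_iff (by norm_num) |>.mp hsq
  have h1 : y 1 + (x 0 * y 0 + x 1 * y 1 - x 2 * y 2) * x 1 = 0 := by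
    have := sq_nonneg (y 0 + (x 0 * y 0 + x 1 * y 1 - x 2 * y 2) * x 0)
    have := sq_nonneg (y 1 + (x 0 * y 0 + x 1 * y 1 - x 2 * y 2) * x 1)
    have := sq_nonneg (x 0 * y 1 - x 1 * y 0)
    have hsq : (y 1 + (x 0 * y 0 + x 1 * y 1 - x 2 * y 2) * x 1) ^ 2 = 0 := by
      linarith
    exact pow_eq_zero_iff (by norm_num) |>.mp hsq
  -- orthogonality gives w2 = 0
  have hxw : x 0 * (y 0 + (x 0 * y 0 + x 1 * y 1 - x 2 * y 2) * x 0)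
      + x 1 * (y 1 + (x 0 * y 0 + x 1 * y 1 - x 2 * y 2) * x 1)
      - x 2 * (y 2 + (x 0 * y 0 + x 1 * y 1 - x 2 * y 2) * x 2) = 0 := by
    linear_combination (x 0 * y 0 + x 1 * y 1 - x 2 * y 2) * hx1
  have h2 : y 2 + (x 0 * y 0 + x 1 * y 1 - x 2 * y 2) * x 2 = 0 := by
    have hx2ne : x 2 ≠ 0 := ne_of_gt hx2
    have : x 2 * (y 2 + (x 0 * y 0 + x 1 * y 1 - x 2 * y 2) * x 2) = 0 := by
      linear_combination x 0 * h0 + x 1 * h1 - hxw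
    exact (mul_eq_zero.mp this).resolve_left hx2ne
  exact hyx ⟨-(x 0 * y 0 + x 1 * y 1 - x 2 * y 2), by
    funext i
    have : ∀ j : Fin 3, y j + (x 0 * y 0 + x 1 * y 1 - x 2 * y 2) * x j = 0 := by
      intro j; fin_cases j <;> assumption
    simp only [Pi.smul_apply, smul_eq_mul]
    linarith [this i]⟩

/-- Corollary 3.6: in a generalized right triangle with right angle at `z`,
`cos α = −(x ∗ y)/‖x ⊗ y‖ · tanh(d(z,x))`, where `α` is the angle at `x`. -/
theorem cosine_right_triangle
    (x z y : Fin 3 → ℝ) (hx : x ∈ Hyp) (hz : z ∈ Hyp) (hxz : x ≠ z)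
    (hy : lor y y = 1 ∨ lor y y = -1)
    (hyx : ¬ ∃ t : ℝ, y = t • x) (hyz : ¬ ∃ t : ℝ, y = t • z)
    (hright : lor (tang z y) (tang z x) = 0) :
    lor (tang x y) (tang x z)
      = -(lor x y) / lnorm (lcross x y) * Real.tanh (dHyp z x) := by
  have hx1 : lor x x = -1 := hx.1
  have hz1 : lor z z = -1 := hz.1
  have hc : lor x z < -1 := lor_xz_lt x z hx hz hxz
  have Pa : (0:ℝ) < lor y y + lor x y ^ 2 := spacelike_pos x y hx hyx
  have Pb : (0:ℝ) < lor y y + lor z y ^ 2 := spacelike_pos z y hz hyz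
  have hzx : lor z x = lor x z := lor_comm z x
  have Pc : (0:ℝ) < lor x z ^ 2 - 1 := by nlinarith
  -- extract the right-angle relation
  unfold tang at hright
  rw [lor_expand] at hright
  have sbpos : 0 < Real.sqrt (lor y y + lor z y ^ 2) := Real.sqrt_pos.mpr Pb
  have scpos : 0 < Real.sqrt (lor x x + lor z x ^ 2) := by
    rw [hx1, hzx]; exact Real.sqrt_pos.mpr (by linarith)
  have hN : lor y x + lor z x * lor y z + lor z y * lor z x
      + lor z y * lor z x * lor z z = 0 := by
    rcases mul_eq_zero.mp hright with h | h
    · rcases mul_eq_zero.mp h with h' | h'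
      · exact absurd h' (ne_of_gt (inv_pos.mpr sbpos))
      · exact absurd h' (ne_of_gt (inv_pos.mpr scpos))
    · exact h
  rw [lor_comm y x, lor_comm y z, hzx, hz1] at hN
  have heq : lor x y + lor z y * lor x z = 0 := by linear_combination hN
  -- expand the left-hand side
  have lhs_eq : lor (tang x y) (tang x z)
      = (Real.sqrt (lor y y + lor x y ^ 2))⁻¹ * (Real.sqrt (lor z z + lor x z ^ 2))⁻¹
        * (lor y z + lor x z * lor y x + lor x y * lor x z
            + lor x y * lor x z * lor x x) := by
    unfold tang; exact lor_expand y z x x _ _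
  rw [lor_comm y x, lor_comm y z, hx1, hz1] at lhs_eq
  -- the norm of the cross product
  have hnorm : lnorm (lcross x y) = Real.sqrt (lor y y + lor x y ^ 2) := by
    rw [lnorm, lcross_sq, hx1]; congr 1; ring
  -- the tanh of the distance
  have htanh : Real.tanh (dHyp z x)
      = Real.sqrt (lor x z ^ 2 - 1) / (-(lor x z)) := by
    rw [dHyp, hzx, tanh_arcosh (-(lor x z)) (by linarith)]
    congr 2; ring
  rw [lhs_eq, hnorm, htanh]
  -- pure scalar algebra
  have sapos : 0 < Real.sqrt (lor y y + lor x y ^ 2) := Real.sqrt_pos.mpr Pa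
  have scpos' : 0 < Real.sqrt (-1 + lor x z ^ 2) := Real.sqrt_pos.mpr (by linarith)
  have hq : Real.sqrt (lor x z ^ 2 - 1) = Real.sqrt (-1 + lor x z ^ 2) := by congr 1; ring
  rw [hq]
  have hsq : Real.sqrt (-1 + lor x z ^ 2) ^ 2 = -1 + lor x z ^ 2 :=
    Real.sq_sqrt (by linarith)
  have hcne : lor x z ≠ 0 := by linarith
  field_simp
  linear_combination heq
    - lor x y * hsq
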